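/- The matrix X⋆ with entries X⋆_{ij} = 2 Σ_{(h,k) ∈ P_i ∩ P_j} x_{hk}, where P_i is the edge set of the root-to-i path in a tree with positive edge weights x_{hk} > 0, is positive definite. -/

import Mathlib

open SimpleGraph Finset Matrix

/-- For a tree rooted at node `0` with positive edge weights, the matrix
`X⋆_{ij} = 2 Σ_{e ∈ P_i ∩ P_j} x_e`, where `P_i` is the edge set of the root-to-`i` path,
is positive definite. -/
theorem path_intersection_matrix_posDef {n : ℕ}
    (G : SimpleGraph (Fin (n + 1))) (hG : G.IsTree)
    (x : Sym2 (Fin (n + 1)) → ℝ) (hx : ∀ e ∈ G.edgeSet, 0 < x e)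
    (P : Fin n → Finset (Sym2 (Fin (n + 1))))
    (hP : ∀ i : Fin n, ∃ p : G.Path 0 i.succ,
      P i = (p : G.Walk 0 i.succ).edges.toFinset)
    (X : Matrix (Fin n) (Fin n) ℝ)
    (hX : ∀ i j, X i j = 2 * ∑ e ∈ P i ∩ P j, x e) :
    X.PosDef := by
  classical
  choose p hp using hP
  set len : Fin n → ℕ := fun j => (p j : G.Walk 0 j.succ).length with hlen
  have hne : ∀ j : Fin n, ((p j : G.Walk 0 j.succ)).darts ≠ [] := by
    intro j h
    have h0 : (p j : G.Walk 0 j.succ).length = 0 := by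
      rw [← SimpleGraph.Walk.length_darts, h]; rfl
    exact (Fin.succ_ne_zero j).symm (SimpleGraph.Walk.eq_of_length_eq_zero h0)
  set e : Fin n → Sym2 (Fin (n + 1)) :=
    fun j => ((p j : G.Walk 0 j.succ).darts.getLast (hne j)).edge with he
  have heform : ∀ j : Fin n,
      e j = s(((p j : G.Walk 0 j.succ).darts.getLast (hne j)).toProd.1, j.succ) := by
    intro j
    have h2 : ((p j : G.Walk 0 j.succ).darts.getLast (hne j)).toProd.2 = j.succ := by
      rw [SimpleGraph.Walk.getLast_darts_eq_lastDart]; rfl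
    rw [he]
    exact congrArg
      (fun z => s((((p j : G.Walk 0 j.succ)).darts.getLast (hne j)).toProd.1, z)) h2
  have hePj : ∀ j, e j ∈ P j := by
    intro j
    rw [hp j, List.mem_toFinset]
    exact List.mem_map_of_mem (List.getLast_mem _)
  have hlenle : ∀ i, len i ≤ n := by
    intro i
    have := (p i).2.length_lt
    simpa using Nat.lt_succ_iff.mp (by simpa using this)
  have hPsub : ∀ i, P i ⊆ G.edgeFinset := by
    intro i ee hee
    rw [hp i, List.mem_toFinset] at hee
    exact SimpleGraph.mem_edgeFinset.mpr ((p i : G.Walk 0 i.succ).edges_subset_edgeSet hee)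
  have hE : ∀ j, e j ∈ G.edgeFinset := fun j => hPsub j (hePj j)
  -- key: if the last edge of path j lies on path i with i ≠ j, then len j < len i
  have key : ∀ i j, e j ∈ P i → i ≠ j → len j < len i := by
    intro i j hm hij
    have hm' : e j ∈ (p i : G.Walk 0 i.succ).edges := by
      rwa [hp i, List.mem_toFinset] at hm
    rw [heform j] at hm'
    have hsupp : j.succ ∈ (p i : G.Walk 0 i.succ).support :=
      SimpleGraph.Walk.snd_mem_support_of_mem_edges _ hm'
    set q := (p i : G.Walk 0 i.succ).takeUntil j.succ hsupp with hq
    have hqpath : q.IsPath := (p i).2.takeUntil hsupp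
    have huniq : (⟨q, hqpath⟩ : G.Path 0 j.succ) = p j :=
      hG.IsAcyclic.path_unique _ _
    have hwalk : q = (p j : G.Walk 0 j.succ) := congrArg Subtype.val huniq
    have hspec := (p i : G.Walk 0 i.succ).take_spec hsupp
    have hlength := congrArg SimpleGraph.Walk.length hspec
    rw [SimpleGraph.Walk.length_append] at hlength
    have hdrop : ((p i : G.Walk 0 i.succ).dropUntil j.succ hsupp).length ≠ 0 := by
      intro h0
      exact hij (Fin.succ_injective _
        (SimpleGraph.Walk.eq_of_length_eq_zero h0)).symm
    have hlj : len j = q.length := by rw [hwalk]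
    calc len j = q.length := hlj
      _ < q.length + ((p i : G.Walk 0 i.succ).dropUntil j.succ hsupp).length :=
          Nat.lt_add_of_pos_right (Nat.pos_of_ne_zero hdrop)
      _ = len i := hlength
  -- prefix property: the whole path j is contained in path i
  have hsub : ∀ i j, e j ∈ P i → P j ⊆ P i := by
    intro i j hm
    have hm' : e j ∈ (p i : G.Walk 0 i.succ).edges := by
      rwa [hp i, List.mem_toFinset] at hm
    rw [heform j] at hm'
    have hsupp : j.succ ∈ (p i : G.Walk 0 i.succ).support :=
      SimpleGraph.Walk.snd_mem_support_of_mem_edges _ hm'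
    set q := (p i : G.Walk 0 i.succ).takeUntil j.succ hsupp with hq
    have hqpath : q.IsPath := (p i).2.takeUntil hsupp
    have huniq : (⟨q, hqpath⟩ : G.Path 0 j.succ) = p j :=
      hG.IsAcyclic.path_unique _ _
    have hwalk : q = (p j : G.Walk 0 j.succ) := congrArg Subtype.val huniq
    intro ee hee
    rw [hp j, List.mem_toFinset, ← hwalk] at hee
    rw [hp i, List.mem_toFinset]
    exact SimpleGraph.Walk.edges_takeUntil_subset _ hsupp hee
  -- injectivity of v ↦ (c_e)
  have hzero : ∀ v : Fin n → ℝ,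
      (∀ ee ∈ G.edgeFinset, ∑ i, (if ee ∈ P i then v i else 0) = 0) → v = 0 := by
    intro v hc
    have H : ∀ d, ∀ j : Fin n, n - len j = d → v j = 0 := by
      intro d
      induction d using Nat.strong_induction_on with
      | _ d ih =>
        intro j hd
        have h0 := hc (e j) (hE j)
        have h1 : ∀ i ∈ Finset.univ, i ≠ j →
            (if e j ∈ P i then v i else 0) = 0 := by
          intro i _ hij
          by_cases hm : e j ∈ P i
          · have hlt := key i j hm hij
            have hle := hlenle i
            have := ih (n - len i) (by omega) i rfl
            simp [hm, this]
          · simp [hm]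
        have h2 : (j ∉ (Finset.univ : Finset (Fin n))) →
            (if e j ∈ P j then v j else 0) = 0 := by
          intro h; exact absurd (Finset.mem_univ j) h
        have := Finset.sum_eq_single j h1 h2
        rw [this] at h0
        simpa [hePj j] using h0
    funext j
    exact H (n - len j) j rfl
  rw [Matrix.posDef_iff_dotProduct_mulVec]
  constructor
  · -- Hermitian
    ext i j
    simp only [Matrix.conjTranspose_apply, star_trivial, hX, Finset.inter_comm]
  · intro v hv
    set c : Sym2 (Fin (n + 1)) → ℝ :=
      fun ee => ∑ i, (if ee ∈ P i then v i else 0) with hc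
    have expand : ∀ i j, v i * X i j * v j =
        ∑ ee ∈ G.edgeFinset, 2 * x ee *
          ((if ee ∈ P i then v i else 0) * (if ee ∈ P j then v j else 0)) := by
      intro i j
      rw [hX]
      have hsubij : P i ∩ P j ⊆ G.edgeFinset :=
        (Finset.inter_subset_left).trans (hPsub i)
      rw [show (P i ∩ P j) = G.edgeFinset ∩ (P i ∩ P j) from
        (Finset.inter_eq_right.mpr hsubij).symm]
      rw [← Finset.sum_ite_mem]
      rw [Finset.mul_sum, Finset.mul_sum, Finset.sum_mul]
      apply Finset.sum_congr rfl
      intro ee _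
      by_cases h1 : ee ∈ P i <;> by_cases h2 : ee ∈ P j <;>
        simp [h1, h2] <;> ring
    have main : dotProduct (star v) (X *ᵥ v) =
        ∑ ee ∈ G.edgeFinset, 2 * x ee * (c ee) ^ 2 := by
      have lhs : dotProduct (star v) (X *ᵥ v) = ∑ i, ∑ j, v i * X i j * v j := by
        simp only [dotProduct, Matrix.mulVec, star_trivial, Pi.star_apply]
        apply Finset.sum_congr rfl
        intro i _
        rw [Finset.mul_sum]
        apply Finset.sum_congr rfl
        intro j _
        ring
      rw [lhs]
      calc ∑ i, ∑ j, v i * X i j * v j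
          = ∑ i, ∑ j, ∑ ee ∈ G.edgeFinset, 2 * x ee *
              ((if ee ∈ P i then v i else 0) * (if ee ∈ P j then v j else 0)) :=
            Finset.sum_congr rfl fun i _ => Finset.sum_congr rfl fun j _ => expand i j
        _ = ∑ i, ∑ ee ∈ G.edgeFinset, ∑ j, 2 * x ee *
              ((if ee ∈ P i then v i else 0) * (if ee ∈ P j then v j else 0)) :=
            Finset.sum_congr rfl fun i _ => Finset.sum_comm
        _ = ∑ ee ∈ G.edgeFinset, ∑ i, ∑ j, 2 * x ee *
              ((if ee ∈ P i then v i else 0) * (if ee ∈ P j then v j else 0)) :=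
            Finset.sum_comm
        _ = ∑ ee ∈ G.edgeFinset, 2 * x ee * (c ee) ^ 2 := by
            refine Finset.sum_congr rfl fun ee _ => ?_
            rw [hc, sq, Finset.sum_mul_sum, Finset.mul_sum]
            refine Finset.sum_congr rfl fun i _ => ?_
            rw [Finset.mul_sum]
    rw [main]
    -- there is an edge with nonzero c
    have hnonzero : ∃ ee ∈ G.edgeFinset, c ee ≠ 0 := by
      by_contra h
      push_neg at h
      exact hv (hzero v (fun ee hee => h ee hee))
    obtain ⟨e0, he0, hce0⟩ := hnonzero
    apply Finset.sum_pos'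
    · intro ee hee
      have hxe : 0 < x ee := hx ee (SimpleGraph.mem_edgeFinset.mp hee)
      positivity
    · refine ⟨e0, he0, ?_⟩
      have hxe : 0 < x e0 := hx e0 (SimpleGraph.mem_edgeFinset.mp he0)
      positivity
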